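/- There exist ε, δ > 0 and a holomorphic function s : {v ∈ ℂ : |v| < ε} → ℂ with s(0) = 0 and |s(v)| < δ for all |v| < ε, such that for all v, σ ∈ ℂ with |v| < ε and |σ| < δ: z₀ is an eigenvalue of N₀ + vW + σW₀ if and only if σ = s(v). In other words, the intersection of the affine plane N₀ + ℂW + ℂW₀ with a sufficiently small neighbourhood of N₀ in the resonance set {N : z₀ is an eigenvalue of N} consists of exactly one simple complex-analytic curve, namely the graph of s. -/

import Mathlib

open Complex MeasureTheory ContinuousLinearMap
open scoped InnerProductSpace

local notation "⟪" x ", " y "⟫" => @inner ℂ _ _ x y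

section helpers

variable {F : Type*} [NormedAddCommGroup F] [NormedSpace ℂ F] [CompleteSpace F]

lemma clm_circleIntegral_comm {G : Type*} [NormedAddCommGroup G] [NormedSpace ℂ G]
    [CompleteSpace G]
    (L : F →L[ℂ] G) {f : ℂ → F} {c : ℂ} {R : ℝ} (hf : CircleIntegrable f c R) :
    L (∮ ζ in C(c, R), f ζ) = ∮ ζ in C(c, R), L (f ζ) := by
  rw [circleIntegral, circleIntegral, ← L.intervalIntegral_comp_comm hf.out]
  congr 1
  ext θ
  rw [_root_.map_smul]

omit [CompleteSpace F] in
lemma circleIntegral_add' {f g : ℂ → F} {c : ℂ} {R : ℝ} (hf : CircleIntegrable f c R)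
    (hg : CircleIntegrable g c R) :
    (∮ ζ in C(c, R), (f ζ + g ζ)) = (∮ ζ in C(c, R), f ζ) + ∮ ζ in C(c, R), g ζ := by
  simp only [circleIntegral, smul_add]
  exact intervalIntegral.integral_add hf.out hg.out

end helpers

/-- The Riesz projection `E = -(2πi)⁻¹ ∮_{|ζ-z₀|=ρ₀} (N₀ - ζ)⁻¹ dζ`, expressed via a
given resolvent function `Res`. -/
noncomputable def rieszE {H : Type*} [NormedAddCommGroup H] [NormedSpace ℂ H]
    (Res : ℂ → (H →L[ℂ] H)) (z₀ : ℂ) (ρ₀ : ℝ) : H →L[ℂ] H :=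
  -((2 * (Real.pi : ℂ) * Complex.I)⁻¹ • ∮ ζ in C(z₀, ρ₀), Res ζ)

set_option maxHeartbeats 1000000

/-- near a simple eigenvalue `z₀` of `N₀`, the intersection of the affine
plane `N₀ + ℂW + ℂW₀` with the resonance set is the graph of a single holomorphic
function `s`. -/
theorem resonance_set_intersection_is_analytic_curve
    {H : Type*} [NormedAddCommGroup H] [InnerProductSpace ℂ H] [CompleteSpace H]
    (A₀ C N₀ W : H →L[ℂ] H)
    (hA₀ : IsSelfAdjoint A₀) (hC : IsCompactOperator ⇑C) (hN₀ : N₀ = A₀ + C)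
    (hWsa : IsSelfAdjoint W) (hWcpt : IsCompactOperator ⇑W)
    (z₀ : ℂ) (hz₀ : z₀ ∈ spectrum ℂ N₀)
    (ρ₀ : ℝ) (hρ₀ : 0 < ρ₀)
    (hiso : ∀ ζ : ℂ, 0 < ‖ζ - z₀‖ → ‖ζ - z₀‖ ≤ ρ₀ → ζ ∉ spectrum ℂ N₀)
    (Res : ℂ → (H →L[ℂ] H))
    (hRes : ∀ ζ : ℂ, 0 < ‖ζ - z₀‖ → ‖ζ - z₀‖ ≤ ρ₀ →
      (N₀ - ζ • (1 : H →L[ℂ] H)) * Res ζ = 1 ∧ Res ζ * (N₀ - ζ • (1 : H →L[ℂ] H)) = 1)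
    -- `z₀` is a simple eigenvalue: the Riesz projection has range `ℂ·χ`
    (χ : H) (hχnorm : ‖χ‖ = 1) (hχ : N₀ χ = z₀ • χ)
    (hrankone : LinearMap.range (rieszE Res z₀ ρ₀ : H →ₗ[ℂ] H) = Submodule.span ℂ {χ}) :
    ∃ ε δ : ℝ, 0 < ε ∧ 0 < δ ∧
      ∃ s : ℂ → ℂ, DifferentiableOn ℂ s (Metric.ball (0 : ℂ) ε) ∧ s 0 = 0 ∧
        (∀ v : ℂ, ‖v‖ < ε → ‖s v‖ < δ) ∧
        ∀ v σ : ℂ, ‖v‖ < ε → ‖σ‖ < δ →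
          ((∃ φ : H, φ ≠ 0 ∧
              (N₀ + v • W + σ • ((innerSL ℂ χ).smulRight χ)) φ = z₀ • φ) ↔ σ = s v) := by
  classical
  set W₀ : H →L[ℂ] H := (innerSL ℂ χ).smulRight χ with hW₀def
  set Q : H →L[ℂ] H := 1 - W₀ with hQdef
  set S : H →L[ℂ] H := N₀ - z₀ • 1 with hSdef
  have hW₀app : ∀ x : H, W₀ x = ⟪χ, x⟫ • χ := fun x => by simp [hW₀def]
  have hQapp : ∀ x : H, Q x = x - ⟪χ, x⟫ • χ := fun x => by
    simp [hQdef, sub_apply, hW₀app]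
  have hSapp : ∀ x : H, S x = N₀ x - z₀ • x := fun x => by
    simp [hSdef, sub_apply, smul_apply]
  have hinner1 : ⟪χ, χ⟫ = 1 := by
    rw [inner_self_eq_norm_sq_to_K, hχnorm]; norm_num
  have hχne : χ ≠ 0 := fun h => by simp [h] at hχnorm
  have hSχ : S χ = 0 := by rw [hSapp, hχ, sub_self]
  have hinnerQ : ∀ x : H, ⟪χ, Q x⟫ = 0 := fun x => by
    simp [hQapp, inner_sub_right, inner_smul_right, hinner1, hχnorm]
  have hW₀Q : ∀ x : H, W₀ (Q x) = 0 := fun x => by rw [hW₀app, hinnerQ, zero_smul]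
  have hQQ : ∀ x : H, Q (Q x) = Q x := fun x => by
    conv_lhs => rw [hQapp (Q x), hinnerQ, zero_smul, sub_zero]
  have hW₀χ : W₀ χ = χ := by rw [hW₀app, hinner1, one_smul]
  have hQχ : Q χ = 0 := by rw [hQapp, hinner1, one_smul, sub_self]
  have hQW₀ : ∀ x : H, Q (W₀ x) = 0 := fun x => by
    rw [hW₀app, _root_.map_smul, hQχ, smul_zero]
  have hW₀W₀ : ∀ x : H, W₀ (W₀ x) = W₀ x := fun x => by
    conv_lhs => rw [hW₀app x, _root_.map_smul, hW₀χ]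
    rw [← hW₀app]
  have hSQ : ∀ x : H, S (Q x) = S x := fun x => by
    rw [hQapp, map_sub, _root_.map_smul, hSχ, smul_zero, sub_zero]
  have hdecomp : ∀ x : H, Q x + W₀ x = x := fun x => by
    rw [hQapp, hW₀app]; abel
  -- resolvent facts
  have hsph : ∀ ζ ∈ Metric.sphere z₀ ρ₀, 0 < ‖ζ - z₀‖ ∧ ‖ζ - z₀‖ ≤ ρ₀ := by
    intro ζ hζ
    rw [Metric.mem_sphere, dist_eq_norm] at hζ
    exact ⟨by rw [hζ]; exact hρ₀, le_of_eq hζ⟩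
  have hresu : ∀ ζ ∈ Metric.sphere z₀ ρ₀, IsUnit (N₀ - ζ • (1 : H →L[ℂ] H)) ∧
      Res ζ = Ring.inverse (N₀ - ζ • (1 : H →L[ℂ] H)) := by
    intro ζ hζ
    obtain ⟨h1, h2⟩ := hRes ζ (hsph ζ hζ).1 (hsph ζ hζ).2
    refine ⟨⟨⟨_, Res ζ, h1, h2⟩, rfl⟩, ?_⟩
    exact (Ring.inverse_unit ⟨_, Res ζ, h1, h2⟩).symm
  have hResCont : ContinuousOn Res (Metric.sphere z₀ ρ₀) := by
    have hg : ContinuousOn (fun ζ : ℂ => Ring.inverse (N₀ - ζ • (1 : H →L[ℂ] H)))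
        (Metric.sphere z₀ ρ₀) := by
      intro ζ hζ
      apply ContinuousAt.continuousWithinAt
      have h1 : ContinuousAt (fun ζ : ℂ => N₀ - ζ • (1 : H →L[ℂ] H)) ζ :=
        (continuous_const.sub (continuous_id.smul continuous_const)).continuousAt
      obtain ⟨u, hu⟩ := (hresu ζ hζ).1
      exact ContinuousAt.comp (hu ▸ NormedRing.inverse_continuousAt u) h1
    exact hg.congr (fun ζ hζ => (hresu ζ hζ).2)
  have hIntRes : CircleIntegrable Res z₀ ρ₀ := hResCont.circleIntegrable hρ₀.le
  have hζne : ∀ ζ ∈ Metric.sphere z₀ ρ₀, ζ - z₀ ≠ 0 := fun ζ hζ => by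
    have := (hsph ζ hζ).1; exact fun h => by simp [h] at this
  have hinvCont : ContinuousOn (fun ζ : ℂ => (ζ - z₀)⁻¹) (Metric.sphere z₀ ρ₀) :=
    ContinuousOn.inv₀ ((continuous_id.sub continuous_const).continuousOn) hζne
  have hIntf : CircleIntegrable (fun ζ : ℂ => (ζ - z₀)⁻¹ • Res ζ) z₀ ρ₀ :=
    (hinvCont.smul hResCont).circleIntegrable hρ₀.le
  have hInt1 : CircleIntegrable (fun ζ : ℂ => (ζ - z₀)⁻¹ • (1 : H →L[ℂ] H)) z₀ ρ₀ :=
    (hinvCont.smul continuousOn_const).circleIntegrable hρ₀.le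
  set E : H →L[ℂ] H := rieszE Res z₀ ρ₀ with hEdef
  set D : H →L[ℂ] H := (2 * (Real.pi : ℂ) * I)⁻¹ • ∮ ζ in C(z₀, ρ₀), (ζ - z₀)⁻¹ • Res ζ
    with hDdef
  have h2πI : (2 * (Real.pi : ℂ) * I) ≠ 0 := by
    simp [Real.pi_ne_zero, I_ne_zero, two_ne_zero]
  have hIntResEq : (∮ ζ in C(z₀, ρ₀), Res ζ) = -((2 * (Real.pi : ℂ) * I) • E) := by
    rw [hEdef, rieszE, smul_neg, smul_inv_smul₀ h2πI, neg_neg]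
  have hSRes : ∀ ζ ∈ Metric.sphere z₀ ρ₀, S * Res ζ = 1 + (ζ - z₀) • Res ζ := by
    intro ζ hζ
    obtain ⟨h1, h2⟩ := hRes ζ (hsph ζ hζ).1 (hsph ζ hζ).2
    have hS : S = (N₀ - ζ • (1 : H →L[ℂ] H)) + (ζ - z₀) • (1 : H →L[ℂ] H) := by
      rw [hSdef, sub_smul]; abel
    rw [hS, add_mul, h1, smul_mul_assoc, one_mul]
  have hResS : ∀ ζ ∈ Metric.sphere z₀ ρ₀, Res ζ * S = 1 + (ζ - z₀) • Res ζ := by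
    intro ζ hζ
    obtain ⟨h1, h2⟩ := hRes ζ (hsph ζ hζ).1 (hsph ζ hζ).2
    have hS : S = (N₀ - ζ • (1 : H →L[ℂ] H)) + (ζ - z₀) • (1 : H →L[ℂ] H) := by
      rw [hSdef, sub_smul]; abel
    rw [hS, mul_add, h2, mul_smul_comm, mul_one]
  have hsplit : (∮ ζ in C(z₀, ρ₀), ((ζ - z₀)⁻¹ • (1 : H →L[ℂ] H) + Res ζ))
      = (2 * (Real.pi : ℂ) * I) • (1 : H →L[ℂ] H) - (2 * (Real.pi : ℂ) * I) • E := by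
    rw [circleIntegral_add' hInt1 hIntRes, circleIntegral.integral_smul_const,
      circleIntegral.integral_sub_center_inv z₀ hρ₀.ne', hIntResEq]
    abel
  have hSD : S * D = 1 - E := by
    have hL : S * (∮ ζ in C(z₀, ρ₀), (ζ - z₀)⁻¹ • Res ζ)
        = ∮ ζ in C(z₀, ρ₀), S * ((ζ - z₀)⁻¹ • Res ζ) :=
      clm_circleIntegral_comm (ContinuousLinearMap.mul ℂ (H →L[ℂ] H) S) hIntf
    have hcongr : (∮ ζ in C(z₀, ρ₀), S * ((ζ - z₀)⁻¹ • Res ζ))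
        = ∮ ζ in C(z₀, ρ₀), ((ζ - z₀)⁻¹ • (1 : H →L[ℂ] H) + Res ζ) := by
      apply circleIntegral.integral_congr hρ₀.le
      intro ζ hζ
      show S * ((ζ - z₀)⁻¹ • Res ζ) = (ζ - z₀)⁻¹ • (1 : H →L[ℂ] H) + Res ζ
      rw [mul_smul_comm, hSRes ζ hζ, smul_add, smul_smul, inv_mul_cancel₀ (hζne ζ hζ), one_smul]
    rw [hDdef, mul_smul_comm, hL, hcongr, hsplit, ← smul_sub, inv_smul_smul₀ h2πI]
  have hDS : D * S = 1 - E := by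
    have hL : (∮ ζ in C(z₀, ρ₀), (ζ - z₀)⁻¹ • Res ζ) * S
        = ∮ ζ in C(z₀, ρ₀), ((ζ - z₀)⁻¹ • Res ζ) * S :=
      clm_circleIntegral_comm ((ContinuousLinearMap.mul ℂ (H →L[ℂ] H)).flip S) hIntf
    have hcongr : (∮ ζ in C(z₀, ρ₀), ((ζ - z₀)⁻¹ • Res ζ) * S)
        = ∮ ζ in C(z₀, ρ₀), ((ζ - z₀)⁻¹ • (1 : H →L[ℂ] H) + Res ζ) := by
      apply circleIntegral.integral_congr hρ₀.le
      intro ζ hζ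
      show ((ζ - z₀)⁻¹ • Res ζ) * S = (ζ - z₀)⁻¹ • (1 : H →L[ℂ] H) + Res ζ
      rw [smul_mul_assoc, hResS ζ hζ, smul_add, smul_smul, inv_mul_cancel₀ (hζne ζ hζ), one_smul]
    rw [hDdef, smul_mul_assoc, hL, hcongr, hsplit, ← smul_sub, inv_smul_smul₀ h2πI]
  have hResχ : ∀ ζ ∈ Metric.sphere z₀ ρ₀, Res ζ χ = (z₀ - ζ)⁻¹ • χ := by
    intro ζ hζ
    obtain ⟨h1, h2⟩ := hRes ζ (hsph ζ hζ).1 (hsph ζ hζ).2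
    have hne : z₀ - ζ ≠ 0 := fun h => hζne ζ hζ (by
      have : ζ = z₀ := by linear_combination -h
      simp [this])
    have hx : (N₀ - ζ • (1 : H →L[ℂ] H)) ((z₀ - ζ)⁻¹ • χ) = χ := by
      rw [_root_.map_smul, sub_apply, smul_apply, one_apply_eq_self, hχ, ← sub_smul, smul_smul,
        inv_mul_cancel₀ hne, one_smul]
    calc Res ζ χ = Res ζ ((N₀ - ζ • (1 : H →L[ℂ] H)) ((z₀ - ζ)⁻¹ • χ)) := by rw [hx]
    _ = (Res ζ * (N₀ - ζ • (1 : H →L[ℂ] H))) ((z₀ - ζ)⁻¹ • χ) := rfl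
    _ = (z₀ - ζ)⁻¹ • χ := by rw [h2, one_apply_eq_self]
  have hDχ : D χ = 0 := by
    have hL : (∮ ζ in C(z₀, ρ₀), (ζ - z₀)⁻¹ • Res ζ) χ
        = ∮ ζ in C(z₀, ρ₀), ((ζ - z₀)⁻¹ • Res ζ) χ :=
      clm_circleIntegral_comm (ContinuousLinearMap.apply ℂ H χ) hIntf
    have hcongr : (∮ ζ in C(z₀, ρ₀), ((ζ - z₀)⁻¹ • Res ζ) χ)
        = ∮ ζ in C(z₀, ρ₀), ((ζ - z₀)⁻¹ * (z₀ - ζ)⁻¹) • χ := by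
      apply circleIntegral.integral_congr hρ₀.le
      intro ζ hζ
      show ((ζ - z₀)⁻¹ • Res ζ) χ = ((ζ - z₀)⁻¹ * (z₀ - ζ)⁻¹) • χ
      rw [smul_apply, hResχ ζ hζ, smul_smul]
    have hzero : (∮ ζ in C(z₀, ρ₀), ((ζ - z₀)⁻¹ * (z₀ - ζ)⁻¹)) = 0 := by
      have heq : ∀ ζ : ℂ, (ζ - z₀)⁻¹ * (z₀ - ζ)⁻¹ = (-1 : ℂ) * (ζ - z₀) ^ (-2 : ℤ) := by
        intro ζ
        have : z₀ - ζ = -(ζ - z₀) := by ring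
        rw [this, zpow_neg, inv_neg]
        rw [show ((2:ℤ)) = ((2:ℕ) : ℤ) from rfl, zpow_natCast, sq, mul_inv]
        ring
      calc (∮ ζ in C(z₀, ρ₀), ((ζ - z₀)⁻¹ * (z₀ - ζ)⁻¹))
          = ∮ ζ in C(z₀, ρ₀), (-1 : ℂ) * (ζ - z₀) ^ (-2 : ℤ) := by
            exact circleIntegral.integral_congr hρ₀.le (fun ζ _ => heq ζ)
        _ = (-1 : ℂ) * ∮ ζ in C(z₀, ρ₀), (ζ - z₀) ^ (-2 : ℤ) :=
            circleIntegral.integral_const_mul _ _ _ _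
        _ = 0 := by
            rw [circleIntegral.integral_sub_zpow_of_ne (by decide) z₀ z₀ ρ₀, mul_zero]
    rw [hDdef, smul_apply, hL, hcongr, circleIntegral.integral_smul_const, hzero, zero_smul,
      smul_zero]
  have hEx : ∀ x : H, ∃ c : ℂ, E x = c • χ := by
    intro x
    have hmem : E x ∈ LinearMap.range (E : H →ₗ[ℂ] H) := ⟨x, rfl⟩
    rw [hEdef, hrankone] at hmem
    obtain ⟨c, hc⟩ := Submodule.mem_span_singleton.mp hmem
    exact ⟨c, hc.symm⟩
  have hQE : ∀ x : H, Q (E x) = 0 := fun x => by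
    obtain ⟨c, hc⟩ := hEx x; rw [hc, _root_.map_smul, hQχ, smul_zero]
  have hSDx : ∀ x : H, S (D x) = x - E x := fun x => by
    have h := congrArg (fun T : H →L[ℂ] H => T x) hSD
    simpa [mul_apply, sub_apply, one_apply] using h
  have hDSx : ∀ x : H, D (S x) = x - E x := fun x => by
    have h := congrArg (fun T : H →L[ℂ] H => T x) hDS
    simpa [mul_apply, sub_apply, one_apply] using h
  have hDQ : ∀ x : H, D (Q x) = D x := fun x => by
    rw [hQapp, map_sub, _root_.map_smul, hDχ, smul_zero, sub_zero]
  -- the block operator M₀ and its inverse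
  set M₀ : H →L[ℂ] H := Q * S * Q + W₀ with hM₀def
  set M₀inv : H →L[ℂ] H := Q * D * Q + W₀ with hM₀invdef
  have hM₀app : ∀ x : H, M₀ x = Q (S (Q x)) + W₀ x := fun x => by
    simp [hM₀def, add_apply, mul_apply]
  have hM₀invapp : ∀ x : H, M₀inv x = Q (D (Q x)) + W₀ x := fun x => by
    simp [hM₀invdef, add_apply, mul_apply]
  have hM₀mul : M₀ * M₀inv = 1 := by
    ext x
    rw [mul_apply_eq_comp, hM₀invapp, hM₀app, one_apply_eq_self]
    rw [show Q (Q (D (Q x)) + W₀ x) = Q (D (Q x)) by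
      rw [map_add, hQQ, hQW₀, add_zero]]
    rw [hSQ, hSDx, map_sub, hQQ, hQE, sub_zero]
    rw [map_add, hW₀Q, zero_add, hW₀W₀]
    exact hdecomp x
  have hM₀invmul : M₀inv * M₀ = 1 := by
    ext x
    rw [mul_apply_eq_comp, hM₀app, hM₀invapp, one_apply_eq_self]
    rw [show Q (Q (S (Q x)) + W₀ x) = Q (S (Q x)) by
      rw [map_add, hQQ, hQW₀, add_zero]]
    rw [hDQ, hSQ, hDSx, map_sub, hQE, sub_zero]
    rw [map_add, hW₀Q, zero_add, hW₀W₀]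
    exact hdecomp x
  have hM₀unit : IsUnit M₀ := ⟨⟨M₀, M₀inv, hM₀mul, hM₀invmul⟩, rfl⟩
  set K : H →L[ℂ] H := M₀inv * (Q * W * Q) with hKdef
  set ε₀ : ℝ := (‖K‖ + 1)⁻¹ with hε₀def
  have hε₀pos : 0 < ε₀ := by positivity
  set M : ℂ → (H →L[ℂ] H) := fun v => M₀ + v • (Q * W * Q) with hMdef
  have hMfact : ∀ v : ℂ, M v = M₀ * (1 + v • K) := by
    intro v
    simp only [hMdef]
    rw [mul_add, mul_one, mul_smul_comm, hKdef, ← mul_assoc, hM₀mul, one_mul]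
  have hMunit : ∀ v : ℂ, ‖v‖ < ε₀ → IsUnit (M v) := by
    intro v hv
    rw [hMfact]
    refine hM₀unit.mul ?_
    have h1 : ‖-(v • K)‖ < 1 := by
      rw [norm_neg, norm_smul]
      calc ‖v‖ * ‖K‖ ≤ ‖v‖ * (‖K‖ + 1) := by nlinarith [norm_nonneg v, norm_nonneg K]
      _ < ε₀ * (‖K‖ + 1) := by
          apply mul_lt_mul_of_pos_right hv; positivity
      _ = 1 := by rw [hε₀def]; field_simp
    have h2 := (Units.oneSub (-(v • K)) h1).isUnit
    rwa [Units.val_oneSub, sub_neg_eq_add] at h2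
  have hMapp : ∀ (v : ℂ) (x : H), M v x = Q (S (Q x)) + W₀ x + v • Q (W (Q x)) := by
    intro v x
    simp only [hMdef, add_apply, smul_apply, mul_apply_eq_comp, hM₀app]
  have hMW₀ : ∀ (v : ℂ) (x : H), M v (W₀ x) = W₀ x := by
    intro v x
    rw [hMapp]
    simp only [hQW₀, map_zero, hW₀W₀, smul_zero, add_zero, zero_add]
  have hW₀M : ∀ (v : ℂ) (x : H), W₀ (M v x) = W₀ x := by
    intro v x
    rw [hMapp]
    simp only [map_add, _root_.map_smul, hW₀Q, hW₀W₀, smul_zero, add_zero, zero_add]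
  -- the analytic function s
  set Φ : ℂ → H := fun v => Ring.inverse (M v) (Q (v • W χ)) with hΦdef
  set s : ℂ → ℂ := fun v => innerSL ℂ χ (S (Φ v) + v • W (Φ v) - v • W χ) with hsdef
  -- the key equivalence
  have key : ∀ v σ : ℂ, ‖v‖ < ε₀ →
      ((∃ φ : H, φ ≠ 0 ∧ (N₀ + v • W + σ • W₀) φ = z₀ • φ) ↔ σ = s v) := by
    intro v σ hv
    set R : H →L[ℂ] H := Ring.inverse (M v) with hRdef
    have hMRx : ∀ x : H, M v (R x) = x := fun x => by
      have h := congrArg (fun T : H →L[ℂ] H => T x) (Ring.mul_inverse_cancel _ (hMunit v hv))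
      simpa [mul_apply, one_apply] using h
    have hRMx : ∀ x : H, R (M v x) = x := fun x => by
      have h := congrArg (fun T : H →L[ℂ] H => T x) (Ring.inverse_mul_cancel _ (hMunit v hv))
      simpa [mul_apply, one_apply] using h
    have hRW₀ : ∀ x : H, R (W₀ x) = W₀ x := fun x => by
      conv_lhs => rw [show W₀ x = M v (W₀ x) from (hMW₀ v x).symm]
      rw [hRMx]
    have hW₀R : ∀ x : H, W₀ (R x) = W₀ x := fun x => by
      have h := hW₀M v (R x)
      rw [hMRx x] at h
      exact h.symm
    have hQBQ : ∀ x : H, Q (S (Q x)) + v • Q (W (Q x)) = M v x - W₀ x := fun x => by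
      rw [hMapp]; abel
    have heq : ∀ φ : H, ((N₀ + v • W + σ • W₀) φ = z₀ • φ) ↔
        S φ + v • W φ + σ • W₀ φ = 0 := by
      intro φ
      rw [← sub_eq_zero]
      have hrw : (N₀ + v • W + σ • W₀) φ - z₀ • φ = S φ + v • W φ + σ • W₀ φ := by
        simp only [add_apply, smul_apply, hSapp]
        abel
      rw [hrw]
    have hΦv : Φ v = v • R (Q (W χ)) := by
      simp only [hΦdef, hRdef]
      rw [_root_.map_smul, _root_.map_smul]
    constructor
    · rintro ⟨φ, hφ0, hφ⟩
      rw [heq] at hφ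
      set a : ℂ := ⟪χ, φ⟫ with hadef
      set ψ : H := R (Q (W χ)) with hψdef
      have hφdec : φ = a • χ + Q φ := by
        conv_lhs => rw [← hdecomp φ]
        rw [hW₀app]
        abel
      have hQ0 : Q (S φ) + v • Q (W φ) = 0 := by
        have h := congrArg Q hφ
        rwa [map_add, map_add, _root_.map_smul, _root_.map_smul, hQW₀, smul_zero, add_zero,
          map_zero] at h
      have hSφ : S φ = S (Q φ) := by
        conv_lhs => rw [hφdec]
        rw [map_add, _root_.map_smul, hSχ, smul_zero, zero_add]
      have hWφ : W φ = a • W χ + W (Q φ) := by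
        conv_lhs => rw [hφdec]
        rw [map_add, _root_.map_smul]
      have hMu : M v (Q φ) = -((v * a) • Q (W χ)) := by
        have h1 := hQBQ (Q φ)
        rw [hQQ, hW₀Q, sub_zero] at h1
        have h2 : (Q (S (Q φ)) + v • Q (W (Q φ))) + (v * a) • Q (W χ) = 0 := by
          rw [hSφ, hWφ] at hQ0
          rw [map_add, _root_.map_smul] at hQ0
          rw [smul_add, smul_smul] at hQ0
          rw [← hQ0]
          abel
        rw [h1] at h2
        exact eq_neg_of_add_eq_zero_left h2
      have hu : Q φ = -((v * a) • ψ) := by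
        have h := congrArg R hMu
        rwa [hRMx, map_neg, _root_.map_smul, ← hψdef] at h
      have ha : a ≠ 0 := by
        intro h0
        apply hφ0
        rw [hφdec, h0, zero_smul, zero_add, hu, h0, mul_zero, zero_smul, neg_zero]
      have hi0 : ⟪χ, S φ⟫ + v * ⟪χ, W φ⟫ + σ * a = 0 := by
        have h := congrArg (fun y => ⟪χ, y⟫) hφ
        simpa [inner_add_right, inner_smul_right, hW₀app, hinner1, hχnorm] using h
      have hiS : ⟪χ, S φ⟫ = -(v * a * ⟪χ, S ψ⟫) := by
        rw [hSφ, hu, map_neg, _root_.map_smul, inner_neg_right, inner_smul_right]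
      have hiW : ⟪χ, W φ⟫ = a * ⟪χ, W χ⟫ - v * a * ⟪χ, W ψ⟫ := by
        rw [hWφ, hu, map_neg, _root_.map_smul, inner_add_right, inner_smul_right,
          inner_neg_right, inner_smul_right]
        ring
      have hsv : s v = v * ⟪χ, S ψ⟫ + v * v * ⟪χ, W ψ⟫ - v * ⟪χ, W χ⟫ := by
        simp only [hsdef, innerSL_apply_apply]
        rw [hΦv]
        rw [_root_.map_smul, _root_.map_smul]
        rw [inner_sub_right, inner_add_right, inner_smul_right, inner_smul_right,
          inner_smul_right, inner_smul_right]
        ring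
      have hfin : a * (σ - s v) = 0 := by
        rw [hsv]
        rw [hiS, hiW] at hi0
        linear_combination hi0
      rcases mul_eq_zero.mp hfin with h | h
      · exact absurd h ha
      · exact sub_eq_zero.mp h
    · intro hσ
      set y : H := Φ v with hydef
      have hyR : y = R (Q (v • W χ)) := by simp only [hydef, hΦdef, hRdef]
      have hW₀y : W₀ y = 0 := by
        rw [hyR, hW₀R, hW₀Q]
      have hQy : Q y = y := by
        have h := hdecomp y
        rwa [hW₀y, add_zero] at h
      refine ⟨χ - y, ?_, ?_⟩
      · intro h
        apply hχne
        have hχy : χ = y := by rwa [sub_eq_zero] at h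
        rw [← hW₀χ, hχy, hW₀y]
      · rw [heq]
        have hMy : M v y = v • Q (W χ) := by
          rw [hyR, hMRx, _root_.map_smul]
        have hkey : Q (S y) + v • Q (W y) = v • Q (W χ) := by
          have h := hQBQ y
          rw [hQy, hW₀y, sub_zero, hMy] at h
          exact h
        set T : H := S (χ - y) + v • W (χ - y) + σ • W₀ (χ - y) with hTdef
        have hTeq : T = -(S y) + v • (W χ - W y) + σ • χ := by
          rw [hTdef, map_sub, map_sub, map_sub, hSχ, hW₀χ, hW₀y, sub_zero, zero_sub]
        have hQT : Q T = 0 := by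
          rw [hTeq, map_add, map_add, map_neg, _root_.map_smul, _root_.map_smul, map_sub,
            hQχ, smul_zero, add_zero, smul_sub]
          rw [show v • Q (W χ) = Q (S y) + v • Q (W y) from hkey.symm]
          abel
        have hW₀T : W₀ T = 0 := by
          rw [hTeq, map_add, map_add, map_neg, _root_.map_smul, _root_.map_smul, map_sub, hW₀χ]
          rw [hW₀app (S y), hW₀app (W χ), hW₀app (W y)]
          have hsy : σ = ⟪χ, S y⟫ + v * ⟪χ, W y⟫ - v * ⟪χ, W χ⟫ := by
            rw [hσ]
            simp only [hsdef, innerSL_apply_apply, ← hydef]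
            rw [inner_sub_right, inner_add_right, inner_smul_right, inner_smul_right]
          rw [hsy]
          module
        calc T = Q T + W₀ T := (hdecomp T).symm
        _ = 0 := by rw [hQT, hW₀T, add_zero]
  -- s 0 = 0
  have hχeig : (N₀ + (0 : ℂ) • W + (0 : ℂ) • W₀) χ = z₀ • χ := by
    simp [add_apply, hχ]
  have hs0 : s 0 = 0 :=
    ((key 0 0 (by simpa using hε₀pos)).mp ⟨χ, hχne, hχeig⟩).symm
  -- differentiability
  have hsdiff : DifferentiableOn ℂ s (Metric.ball (0 : ℂ) ε₀) := by
    intro v hv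
    rw [Metric.mem_ball, dist_zero_right] at hv
    apply DifferentiableAt.differentiableWithinAt
    have dM : DifferentiableAt ℂ M v := by
      simp only [hMdef]
      exact (differentiableAt_const M₀).add (differentiableAt_id.smul_const (Q * W * Q))
    have dR : DifferentiableAt ℂ (fun v => Ring.inverse (M v)) v := dM.inverse (hMunit v hv)
    have darg : DifferentiableAt ℂ (fun v : ℂ => Q (v • W χ)) v :=
      (differentiableAt_const Q).clm_apply (differentiableAt_id.smul_const (W χ))
    have dΦ : DifferentiableAt ℂ Φ v := by
      simp only [hΦdef]
      exact dR.clm_apply darg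
    have dSΦ : DifferentiableAt ℂ (fun v => S (Φ v)) v :=
      (differentiableAt_const S).clm_apply dΦ
    have dWΦ : DifferentiableAt ℂ (fun v => W (Φ v)) v :=
      (differentiableAt_const W).clm_apply dΦ
    have dvWΦ : DifferentiableAt ℂ (fun v : ℂ => v • W (Φ v)) v :=
      differentiableAt_id.smul dWΦ
    have dvWχ : DifferentiableAt ℂ (fun v : ℂ => v • W χ) v :=
      differentiableAt_id.smul_const (W χ)
    have dinner : DifferentiableAt ℂ (fun v : ℂ => S (Φ v) + v • W (Φ v) - v • W χ) v :=
      (dSΦ.add dvWΦ).sub dvWχ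
    simp only [hsdef]
    exact (differentiableAt_const (innerSL ℂ χ)).clm_apply dinner
  -- continuity at 0 and choice of ε, δ
  have hscont : ContinuousAt s 0 :=
    hsdiff.continuousOn.continuousAt (Metric.isOpen_ball.mem_nhds (by
      simp [Metric.mem_ball, hε₀pos]))
  obtain ⟨ε₁, hε₁pos, hε₁⟩ := Metric.continuousAt_iff.mp hscont 1 one_pos
  refine ⟨min ε₀ ε₁, 1, lt_min hε₀pos hε₁pos, one_pos, s,
    hsdiff.mono (Metric.ball_subset_ball (min_le_left _ _)), hs0, ?_, ?_⟩
  · intro v hv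
    have h2 := hε₁ (show dist v 0 < ε₁ by
      rw [dist_zero_right]; exact lt_of_lt_of_le hv (min_le_right _ _))
    rwa [hs0, dist_zero_right] at h2
  · intro v σ hv hσ
    exact key v σ (lt_of_lt_of_le hv (min_le_left _ _))
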